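/- Let n ≥ 1, let i be an integer, and let ⋆ be a multiplicative Lie algebra structure on the dihedral group Dₙ satisfying a⋆b = bⁱ. Then for all x, y, z ∈ Dₙ one has [x⋆y, ʸz]·[y⋆z, ᶻx]·[z⋆x, ˣy] = 1, where ˣy = xyx⁻¹ and [g,h] = g·h·g⁻¹·h⁻¹. -/

import Mathlib

/-- A multiplicative Lie algebra structure on a group `K` is a map `⋆ : K × K → K`
satisfying the five axioms below (writing `ˣy` for `x * y * x⁻¹`). -/
def IsMulLieStructure {K : Type*} [Group K] (star : K → K → K) : Prop :=
  (∀ x : K, star x x = 1) ∧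
  (∀ x y z : K, star x (y * z) = star x y * (y * star x z * y⁻¹)) ∧
  (∀ x y z : K, star (x * y) z = (x * star y z * x⁻¹) * star x z) ∧
  (∀ x y z : K,
    star (star x y) (y * z * y⁻¹) * star (star y z) (z * x * z⁻¹) *
      star (star z x) (x * y * x⁻¹) = 1) ∧
  (∀ x y z : K, z * star x y * z⁻¹ = star (z * x * z⁻¹) (z * y * z⁻¹))

/-- A normalized 2-cocycle on a group `K` with values in `ℂˣ` (trivial action). -/
def IsNormalizedCocycle {K : Type*} [Group K] (f : K → K → ℂˣ) : Prop :=
  (∀ x y z : K, f x y * f (x * y) z = f y z * f x (y * z)) ∧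
  (∀ x : K, f x 1 = 1 ∧ f 1 x = 1)

/-- `h` is a multiplicative Lie partner of the 2-cocycle `f` with respect to the
multiplicative Lie algebra structure `star` on `K`. -/
def IsMulLiePartner {K : Type*} [Group K] (star : K → K → K)
    (f h : K → K → ℂˣ) : Prop :=
  (∀ x : K, h x 1 = 1 ∧ h 1 x = 1 ∧ h x x = 1) ∧
  (∀ x y z : K, h x (y * z) =
    h x y * h x z * (f y⁻¹ y)⁻¹ * f y (star x z) * f (y * star x z) y⁻¹ *
      f (star x y) (y * star x z * y⁻¹)) ∧
  (∀ x y z : K, h (x * y) z =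
    h y z * h x z * (f x⁻¹ x)⁻¹ * f x (star y z) * f (x * star y z) x⁻¹ *
      f (x * star y z * x⁻¹) (star x z)) ∧
  (∀ x y z : K,
    h (star y x) (x * z * x⁻¹) * h (star x z) (z * y * z⁻¹) * h (star z y) (y * x * y⁻¹) *
      f (star (star y x) (x * z * x⁻¹)) (star (star x z) (z * y * z⁻¹)) *
      f (star (star y x) (x * z * x⁻¹) * star (star x z) (z * y * z⁻¹))
        (star (star z y) (y * x * y⁻¹)) = 1) ∧
  (∀ x y z : K, h (z * x * z⁻¹) (z * y * z⁻¹) =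
    h x y * f z (star x y) * (f z⁻¹ z)⁻¹ * f (z * star x y) z⁻¹)

/-- The reflection `a = sr 0` of the dihedral group `Dₙ`. -/
def Da (n : ℕ) : DihedralGroup n := DihedralGroup.sr 0

/-- The rotation `b = r 1` of the dihedral group `Dₙ`. -/
def Db (n : ℕ) : DihedralGroup n := DihedralGroup.r 1

open scoped commutatorElement

section Aux
open DihedralGroup

lemma inv_r' {n : ℕ} (j : ZMod n) : (r j : DihedralGroup n)⁻¹ = r (-j) := rfl
lemma inv_sr' {n : ℕ} (j : ZMod n) : (sr j : DihedralGroup n)⁻¹ = sr j := rfl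

lemma r_zpow {n : ℕ} (m : ℤ) : (r 1 : DihedralGroup n) ^ m = r (m : ZMod n) := by
  induction m using Int.induction_on with
  | zero => simp
  | succ k ih => rw [zpow_add_one, ih, r_mul_r]; push_cast; ring_nf
  | pred k ih => rw [zpow_sub_one, ih, inv_r', r_mul_r]; push_cast; ring_nf

variable {n : ℕ} {star : DihedralGroup n → DihedralGroup n → DihedralGroup n}

lemma star_one_right (h : IsMulLieStructure star) (x : DihedralGroup n) : star x 1 = 1 := by
  have h2 := h.2.1 x 1 1
  simp only [one_mul, inv_one, mul_one] at h2
  have : star x 1 * 1 = star x 1 * star x 1 := by rw [mul_one]; exact h2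
  exact (mul_left_cancel this).symm

lemma star_antisymm (h : IsMulLieStructure star) (x y : DihedralGroup n) :
    star y x = (star x y)⁻¹ := by
  obtain ⟨h1, h2, h3, -, -⟩ := h
  have e1 : star y (x * y) = star y x := by rw [h2, h1]; group
  have e2 : star x (x * y) = x * star x y * x⁻¹ := by rw [h2, h1, one_mul]
  have e3 := h1 (x * y)
  rw [h3, e1, e2] at e3
  have e4 : x * (star y x * star x y) * x⁻¹ = 1 := by
    rw [← e3]; group
  have e5 : star y x * star x y = 1 := by
    have := congrArg (fun g => x⁻¹ * g * x) e4
    simpa [mul_assoc] using this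
  exact eq_inv_of_mul_eq_one_left e5

variable {i : ℤ}

lemma star_r_one_r (h : IsMulLieStructure star) (m : ℕ) :
    star (r 1) (r (m : ZMod n)) = 1 := by
  induction m with
  | zero => simpa using star_one_right h (r 1)
  | succ k ih =>
    have : ((k + 1 : ℕ) : ZMod n) = (k : ZMod n) + 1 := by push_cast; ring
    rw [this, show (r ((k:ZMod n)+1) : DihedralGroup n) = r (k : ZMod n) * r 1 by rw [r_mul_r],
      h.2.1]
    rw [h.1, ih]
    simp

lemma star_r_r (h : IsMulLieStructure star) [NeZero n] (j k : ZMod n) :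
    star (r j) (r k) = 1 := by
  have key : ∀ m : ℕ, ∀ k : ZMod n, star (r (m : ZMod n)) (r k) = 1 := by
    intro m
    induction m with
    | zero =>
      intro k
      have : star (1 : DihedralGroup n) (r k) = 1 := by
        have := star_antisymm h (1 : DihedralGroup n) (r k)
        rw [star_one_right h] at this
        simpa using this.symm
      simpa using this
    | succ m ih =>
      intro k
      have hc : ((m + 1 : ℕ) : ZMod n) = (m : ZMod n) + 1 := by push_cast; ring
      rw [hc, show (r ((m:ZMod n)+1) : DihedralGroup n) = r (m : ZMod n) * r 1 by rw [r_mul_r],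
        h.2.2.1]
      have h1 : star (r 1) (r k) = 1 := by
        rw [show (r k : DihedralGroup n) = r ((k.val : ℕ) : ZMod n) by rw [ZMod.natCast_val, ZMod.cast_id]]
        exact star_r_one_r h k.val
      rw [h1, ih k]
      simp
  rw [show (r j : DihedralGroup n) = r ((j.val : ℕ) : ZMod n) by rw [ZMod.natCast_val, ZMod.cast_id]]
  exact key j.val k

lemma star_a_r (h : IsMulLieStructure star)
    (hab : star (Da n) (Db n) = (Db n) ^ i) [NeZero n] (k : ZMod n) :
    star (sr 0) (r k) = r ((i : ZMod n) * k) := by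
  have hab' : star (sr 0) (r 1) = r ((i : ZMod n)) := by
    have := hab
    rw [Da, Db, _root_.r_zpow] at this
    exact this
  have key : ∀ m : ℕ, star (sr 0) (r (m : ZMod n)) = r ((i : ZMod n) * (m : ZMod n)) := by
    intro m
    induction m with
    | zero => simpa using star_one_right h (sr 0)
    | succ m ih =>
      have hc : ((m + 1 : ℕ) : ZMod n) = (m : ZMod n) + 1 := by push_cast; ring
      rw [hc, show (r ((m:ZMod n)+1) : DihedralGroup n) = r (m : ZMod n) * r 1 by rw [r_mul_r],
        h.2.1, ih, hab']
      simp only [r_mul_r, inv_r']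
      apply congrArg
      push_cast
      ring
  have := key k.val
  rwa [ZMod.natCast_val, ZMod.cast_id] at this

lemma star_r_a (h : IsMulLieStructure star)
    (hab : star (Da n) (Db n) = (Db n) ^ i) [NeZero n] (k : ZMod n) :
    star (r k) (sr 0) = r (-((i : ZMod n) * k)) := by
  rw [star_antisymm h, star_a_r h hab, inv_r']

lemma star_a_sr (h : IsMulLieStructure star)
    (hab : star (Da n) (Db n) = (Db n) ^ i) [NeZero n] (k : ZMod n) :
    star (sr 0) (sr k) = r (-((i : ZMod n) * k)) := by
  have : (sr k : DihedralGroup n) = sr 0 * r k := by simp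
  rw [this, h.2.1, h.1, star_a_r h hab]
  rw [inv_sr', sr_mul_r, sr_mul_sr]
  simp

lemma star_r_sr (h : IsMulLieStructure star)
    (hab : star (Da n) (Db n) = (Db n) ^ i) [NeZero n] (j k : ZMod n) :
    star (r j) (sr k) = r (-((i : ZMod n) * j)) := by
  have : (sr k : DihedralGroup n) = sr 0 * r k := by simp
  rw [this, h.2.1, star_r_a h hab, star_r_r h]
  simp

lemma star_sr_r (h : IsMulLieStructure star)
    (hab : star (Da n) (Db n) = (Db n) ^ i) [NeZero n] (j k : ZMod n) :
    star (sr j) (r k) = r ((i : ZMod n) * k) := by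
  have : (sr j : DihedralGroup n) = sr 0 * r j := by simp
  rw [this, h.2.2.1, star_r_r h, star_a_r h hab]
  simp

lemma star_sr_sr (h : IsMulLieStructure star)
    (hab : star (Da n) (Db n) = (Db n) ^ i) [NeZero n] (j k : ZMod n) :
    star (sr j) (sr k) = r ((i : ZMod n) * j - (i : ZMod n) * k) := by
  have : (sr j : DihedralGroup n) = sr 0 * r j := by simp
  rw [this, h.2.2.1, star_r_sr h hab, star_a_sr h hab]
  simp only [inv_sr', sr_mul_r, r_mul_sr, sr_mul_sr, r_mul_r]
  apply congrArg
  ring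

end Aux

theorem dihedral_J_trivial (n : ℕ) (hn : 1 ≤ n) (i : ℤ)
    (star : DihedralGroup n → DihedralGroup n → DihedralGroup n)
    (hstar : IsMulLieStructure star)
    (hab : star (Da n) (Db n) = (Db n) ^ i) :
    ∀ x y z : DihedralGroup n,
      ⁅star x y, y * z * y⁻¹⁆ * ⁅star y z, z * x * z⁻¹⁆ * ⁅star z x, x * y * x⁻¹⁆ = 1 := by
  haveI : NeZero n := ⟨by omega⟩
  open DihedralGroup in
  have hrr := star_r_r hstar (n := n)
  have har := star_a_r hstar hab
  have hra := star_r_a hstar hab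
  have has := star_a_sr hstar hab
  have hrs := star_r_sr hstar hab
  have hsr := star_sr_r hstar hab
  have hss := star_sr_sr hstar hab
  rintro (p | p) (q | q) (l | l) <;>
    simp only [commutatorElement_def, DihedralGroup.r_mul_r, DihedralGroup.r_mul_sr,
      DihedralGroup.sr_mul_r, DihedralGroup.sr_mul_sr, inv_r', inv_sr',
      hrr, hss, hrs, hsr, DihedralGroup.one_def, one_mul, mul_one] <;>
    first
      | rfl
      | exact congrArg DihedralGroup.r (by ring)
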